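/- Let N ≥ 3 be an integer and let γ = (γ_1,…,γ_N) ∈ ℝ^N with γ ≠ 0, and set v(x) = ∑_{k=1}^N γ_k x_k / (N(N−2)+|x|²)^{N/2} for x ∈ ℝ^N. Let (y_n) be a sequence of continuously differentiable functions on ℝ^N such that y_n → v and ∇y_n → ∇v uniformly on every compact subset of ℝ^N. Then for every R > 0 there exists n₀ such that for all n ≥ n₀ the sets { x ∈ ℝ^N : |x| < R, y_n(x) > 0 } and { x ∈ ℝ^N : |x| < R, y_n(x) < 0 } are both nonempty and connected. -/

import Mathlib

set_option maxHeartbeats 1000000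

open scoped BigOperators
open Filter

section Aux
open scoped RealInnerProductSpace
open Set

variable {F : Type*} [NormedAddCommGroup F] [InnerProductSpace ℝ F] [CompleteSpace F]

lemma stmt18_inner_gradient_eq (f : F → ℝ) (x w : F) :
    ⟪gradient f x, w⟫ = fderiv ℝ f x w := by
  unfold gradient
  exact InnerProductSpace.toDual_symm_apply

lemma stmt18_gradient_neg (f : F → ℝ) (x : F) :
    gradient (fun y => -f y) x = - gradient f x := by
  unfold gradient
  rw [fderiv_fun_neg, map_neg]

lemma stmt18_fderiv_v_apply (p c₀ : ℝ) (hc₀ : 0 < c₀) (γ : F) (v : F → ℝ)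
    (hv : ∀ x, v x = ⟪γ,x⟫ * (c₀ + ‖x‖^2)^p) (x w : F) :
    fderiv ℝ v x w
      = ⟪γ,w⟫ * (c₀+‖x‖^2)^p + ⟪γ,x⟫ * (p * (c₀+‖x‖^2)^(p-1)) * (2*⟪x,w⟫) := by
  have hx : (0:ℝ) < c₀ + ‖x‖^2 := by positivity
  have h1 : HasFDerivAt (fun y : F => ⟪γ,y⟫) (innerSL ℝ γ) x := (innerSL ℝ γ).hasFDerivAt
  have h2 : HasFDerivAt (fun y : F => ‖y‖^2) (2 • (innerSL ℝ x) : F →L[ℝ] ℝ) x :=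
    (hasStrictFDerivAt_norm_sq x).hasFDerivAt
  have h3 : HasDerivAt (fun r : ℝ => (c₀ + r)^p) (p * (c₀+‖x‖^2)^(p-1)) (‖x‖^2) := by
    have := ((hasDerivAt_id (‖x‖^2)).const_add c₀).rpow_const (p := p) (Or.inl (ne_of_gt hx))
    simpa using this
  have h4 := h3.comp_hasFDerivAt x h2
  have h5 := h1.mul h4
  have h6 : HasFDerivAt v
      (⟪γ,x⟫ • (p * (c₀ + ‖x‖ ^ 2) ^ (p - 1)) • 2 • (innerSL ℝ x) +
        ((c₀ + ‖x‖^2)^p) • (innerSL ℝ γ)) x := by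
    rw [funext hv]; exact h5
  rw [h6.fderiv]
  simp [ContinuousLinearMap.smul_apply, real_inner_comm x w]
  ring

lemma stmt18_core_connected (u : F → ℝ) (hu : ContDiff ℝ 1 u) (e : F) (he : ‖e‖ = 1)
    (R σ : ℝ) (hR : 0 < R) (hσ : 0 < σ) (hσR : σ ≤ R/4)
    (hA : ∀ x : F, ‖x‖ ≤ R → σ ≤ ⟪e,x⟫ → 0 < u x)
    (hB : ∀ x : F, ‖x‖ ≤ R → 0 < u x → -σ < ⟪e,x⟫)
    (hC : ∀ x₀ pt : F, ‖x₀‖ ≤ R → |⟪e,x₀⟫| ≤ σ → ‖pt‖ ≤ R → |⟪e,pt⟫| ≤ σ →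
      0 ≤ fderiv ℝ u pt ((R/2) • e - x₀)) :
    IsConnected {x : F | ‖x‖ < R ∧ 0 < u x} := by
  set S := {x : F | ‖x‖ < R ∧ 0 < u x} with hS
  set q : F := (R/2) • e with hqdef
  have hqnorm : ‖q‖ = R/2 := by
    rw [hqdef, norm_smul, he, mul_one, Real.norm_eq_abs, abs_of_pos] <;> linarith
  have hee : ⟪e,e⟫ = (1:ℝ) := by
    rw [real_inner_self_eq_norm_sq, he]; norm_num
  have hqe : ⟪e,q⟫ = R/2 := by rw [hqdef, real_inner_smul_right, hee]; ring
  have hq : q ∈ S := by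
    refine ⟨by rw [hqnorm]; linarith, hA q (by rw [hqnorm]; linarith) (by rw [hqe]; linarith)⟩
  refine ⟨⟨q, hq⟩, isPreconnected_of_forall q ?_⟩
  intro x₀ hx₀
  refine ⟨segment ℝ x₀ q, ?_, right_mem_segment ℝ x₀ q, left_mem_segment ℝ x₀ q,
    (convex_segment x₀ q).isPreconnected⟩
  obtain ⟨hx₀R, hx₀u⟩ := hx₀
  intro m hm
  have hmball : ‖m‖ < R := by
    have : m ∈ Metric.ball (0:F) R :=
      (convex_ball (0:F) R).segment_subset (by simpa using hx₀R) (by simpa using hq.1) hm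
    simpa using this
  refine ⟨hmball, ?_⟩
  rw [segment_eq_image'] at hm
  obtain ⟨θ, hθ, hmθ⟩ := hm
  set s₀ := ⟪e,x₀⟫ with hs₀def
  have hinner : ∀ τ : ℝ, ⟪e, x₀ + τ • (q - x₀)⟫ = s₀ + τ * (R/2 - s₀) := by
    intro τ
    rw [inner_add_right, real_inner_smul_right, inner_sub_right, hqe]
  by_cases hcase : σ ≤ s₀
  · apply hA m hmball.le
    have : ⟪e,m⟫ = s₀ + θ * (R/2 - s₀) := by rw [← hmθ]; exact hinner θ
    rw [this]
    nlinarith [hθ.1, hθ.2]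
  · push_neg at hcase
    have hs₀lb : -σ < s₀ := hB x₀ hx₀R.le hx₀u
    by_cases hθσ : σ ≤ s₀ + θ * (R/2 - s₀)
    · apply hA m hmball.le
      rw [← hmθ, hinner θ]; exact hθσ
    · push_neg at hθσ
      set φ : ℝ → ℝ := fun τ => u (x₀ + τ • (q - x₀)) with hφdef
      have hΔpos : (0:ℝ) < R/2 - s₀ := by linarith
      have hptball : ∀ τ ∈ Icc (0:ℝ) 1, ‖x₀ + τ • (q - x₀)‖ ≤ R := by
        intro τ hτ
        have : x₀ + τ • (q - x₀) ∈ Metric.ball (0:F) R := by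
          have := (convex_ball (0:F) R).segment_subset (by simpa using hx₀R)
            (by simpa using hq.1)
          apply this
          rw [segment_eq_image']
          exact ⟨τ, hτ, rfl⟩
        exact (mem_ball_zero_iff.mp this).le
      have hderiv : ∀ τ : ℝ, HasDerivAt φ (fderiv ℝ u (x₀ + τ • (q - x₀)) (q - x₀)) τ := by
        intro τ
        have hline : HasDerivAt (fun τ : ℝ => x₀ + τ • (q - x₀)) (q - x₀) τ := by
          have := ((hasDerivAt_id τ).smul_const (q - x₀)).const_add x₀
          simpa using this
        exact ((hu.differentiable one_ne_zero).differentiableAt.hasFDerivAt).comp_hasDerivAt τ hline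
      have hmono : MonotoneOn φ (Icc 0 θ) := by
        have hdiff : Differentiable ℝ φ := fun τ => (hderiv τ).differentiableAt
        apply monotoneOn_of_deriv_nonneg (convex_Icc 0 θ)
        · exact hdiff.continuous.continuousOn
        · intro τ _
          exact (hdiff τ).differentiableWithinAt
        · intro τ hτ
          rw [interior_Icc] at hτ
          rw [(hderiv τ).deriv]
          have hτ01 : τ ∈ Icc (0:ℝ) 1 := ⟨hτ.1.le, hτ.2.le.trans hθ.2⟩
          have hsmall : |⟪e, x₀ + τ • (q - x₀)⟫| ≤ σ := by
            rw [hinner τ, abs_le]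
            constructor
            · nlinarith [hτ.1, hΔpos]
            · nlinarith [hτ.2, hθ.2, hτ.1]
          have hw : q - x₀ = (R/2) • e - x₀ := by rw [hqdef]
          rw [hw]
          exact hC x₀ _ hx₀R.le (abs_le.2 ⟨hs₀lb.le, hcase.le⟩) (hptball τ hτ01) hsmall
      have h0 : φ 0 = u x₀ := by simp [hφdef]
      have hθmem : θ ∈ Icc (0:ℝ) θ := ⟨hθ.1, le_refl θ⟩
      have h0mem : (0:ℝ) ∈ Icc (0:ℝ) θ := ⟨le_refl 0, hθ.1⟩
      have := hmono h0mem hθmem hθ.1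
      rw [h0] at this
      have hfin : 0 < φ θ := lt_of_lt_of_le hx₀u this
      have : u m = φ θ := by rw [hφdef]; exact (congrArg u hmθ).symm
      rw [this]; exact hfin

lemma stmt18_keylemma (p c₀ : ℝ) (hp : p < 0) (hc₀ : 0 < c₀) (γ : F) (hγ : γ ≠ 0)
    (v : F → ℝ) (hv : ∀ x, v x = ⟪γ,x⟫ * (c₀ + ‖x‖^2)^p)
    (R : ℝ) (hR : 0 < R) :
    ∃ δ : ℝ, 0 < δ ∧ ∃ δ' : ℝ, 0 < δ' ∧ ∀ u : F → ℝ, ContDiff ℝ 1 u →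
      (∀ x : F, ‖x‖ ≤ R → |u x - v x| ≤ δ) →
      (∀ x : F, ‖x‖ ≤ R → ‖gradient u x - gradient v x‖ ≤ δ') →
      IsConnected {x : F | ‖x‖ < R ∧ 0 < u x} := by
  set G := ‖γ‖ with hGdef
  have hG : 0 < G := norm_pos_iff.mpr hγ
  set e : F := ‖γ‖⁻¹ • γ with hedef
  have he : ‖e‖ = 1 := norm_smul_inv_norm hγ
  have hγe : ∀ x : F, ⟪γ,x⟫ = G * ⟪e,x⟫ := by
    intro x
    rw [hedef, real_inner_smul_left, ← hGdef]
    field_simp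
  set fR : ℝ := (c₀ + R^2)^p with hfRdef
  have hfR : 0 < fR := Real.rpow_pos_of_pos (by positivity) p
  set F0 : ℝ := (-p) * c₀^(p-1) with hF0def
  have hF0 : 0 < F0 := by
    apply mul_pos (by linarith)
    exact Real.rpow_pos_of_pos hc₀ _
  set c : ℝ := G * fR / 2 with hcdef
  have hc : 0 < c := by positivity
  set σ : ℝ := min (R/4) (c/(32*G*F0*R)) with hσdef
  have hσpos : 0 < σ := lt_min (by linarith) (by positivity)
  have hσ1 : σ ≤ R/4 := min_le_left _ _
  have hσ3 : 4*G*σ*F0*R^2 ≤ c*R/8 := by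
    have h1 : σ ≤ c/(32*G*F0*R) := min_le_right _ _
    have h2 : 4*G*F0*R^2 * σ ≤ 4*G*F0*R^2 * (c/(32*G*F0*R)) := by
      apply mul_le_mul_of_nonneg_left h1 (by positivity)
    have h3 : 4*G*F0*R^2 * (c/(32*G*F0*R)) = c*R/8 := by
      field_simp
      ring
    nlinarith
  refine ⟨G * fR * σ / 2, by positivity, c/16, by positivity, ?_⟩
  set δ : ℝ := G * fR * σ / 2 with hδdef
  set δ' : ℝ := c/16 with hδ'def
  intro u hu hclose hgrad
  have hgpos : ∀ x : F, (0:ℝ) < c₀ + ‖x‖^2 := fun x => by positivity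
  have hg_lb : ∀ x : F, ‖x‖ ≤ R → fR ≤ (c₀ + ‖x‖^2)^p := by
    intro x hx
    rw [hfRdef]
    apply Real.rpow_le_rpow_of_nonpos (hgpos x) _ hp.le
    nlinarith [norm_nonneg x]
  have hgd_bound : ∀ x : F, |p * (c₀ + ‖x‖^2)^(p-1)| ≤ F0 := by
    intro x
    have h1 : (0:ℝ) < (c₀ + ‖x‖^2)^(p-1) := Real.rpow_pos_of_pos (hgpos x) _
    have h2 : (c₀ + ‖x‖^2)^(p-1) ≤ c₀^(p-1) := by
      apply Real.rpow_le_rpow_of_nonpos hc₀ (by nlinarith [norm_nonneg x]) (by linarith)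
    rw [abs_mul, abs_of_pos h1, abs_of_neg hp, hF0def]
    apply mul_le_mul_of_nonneg_left h2 (by linarith)
  apply stmt18_core_connected u hu e he R σ hR hσpos hσ1
  · intro x hx hs
    have hub := (abs_le.mp (hclose x hx)).1
    have hvx : G * σ * fR ≤ v x := by
      rw [hv x, hγe x]
      have h1 := hg_lb x hx
      have hs0 : (0:ℝ) < ⟪e,x⟫ := lt_of_lt_of_le hσpos hs
      have h2 : ⟪e,x⟫ * fR ≤ ⟪e,x⟫ * (c₀ + ‖x‖^2)^p := mul_le_mul_of_nonneg_left h1 hs0.le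
      have h3 : σ * fR ≤ ⟪e,x⟫ * fR := mul_le_mul_of_nonneg_right hs hfR.le
      calc G * σ * fR = G * (σ * fR) := by ring
        _ ≤ G * (⟪e,x⟫ * (c₀ + ‖x‖^2)^p) := by
            apply mul_le_mul_of_nonneg_left (le_trans h3 h2) hG.le
        _ = G * ⟪e,x⟫ * (c₀ + ‖x‖^2)^p := by ring
    have : G * σ * fR = 2 * δ := by rw [hδdef]; ring
    nlinarith
  · intro x hx hux
    by_contra h'
    push_neg at h'
    have hub := (abs_le.mp (hclose x hx)).2
    have hvx : v x ≤ -(G * σ * fR) := by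
      rw [hv x, hγe x]
      have hg := hg_lb x hx
      have hs : ⟪e,x⟫ ≤ -σ := h'
      have hs0 : ⟪e,x⟫ ≤ 0 := by linarith
      have h2 : ⟪e,x⟫ * (c₀ + ‖x‖^2)^p ≤ ⟪e,x⟫ * fR := mul_le_mul_of_nonpos_left hg hs0
      have h3 : ⟪e,x⟫ * fR ≤ -σ * fR := mul_le_mul_of_nonneg_right hs hfR.le
      calc G * ⟪e,x⟫ * (c₀ + ‖x‖^2)^p = G * (⟪e,x⟫ * (c₀ + ‖x‖^2)^p) := by ring
        _ ≤ G * (-σ * fR) := by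
            apply mul_le_mul_of_nonneg_left (le_trans h2 h3) hG.le
        _ = -(G * σ * fR) := by ring
    have : G * σ * fR = 2 * δ := by rw [hδdef]; ring
    nlinarith
  · intro x₀ pt hx₀R hs₀ hptR hs
    set w : F := (R/2) • e - x₀ with hwdef
    have hwnorm : ‖w‖ ≤ 2*R := by
      rw [hwdef]
      calc ‖(R/2) • e - x₀‖ ≤ ‖(R/2) • e‖ + ‖x₀‖ := norm_sub_le _ _
        _ ≤ R/2 + R := by
            rw [norm_smul, he, mul_one, Real.norm_eq_abs, abs_of_pos (by linarith : (0:ℝ) < R/2)]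
            linarith
        _ ≤ 2*R := by linarith
    have herr : |fderiv ℝ u pt w - fderiv ℝ v pt w| ≤ δ' * (2*R) := by
      have h1 : ⟪gradient u pt - gradient v pt, w⟫
          = fderiv ℝ u pt w - fderiv ℝ v pt w := by
        rw [inner_sub_left, stmt18_inner_gradient_eq, stmt18_inner_gradient_eq]
      calc |fderiv ℝ u pt w - fderiv ℝ v pt w| = |⟪gradient u pt - gradient v pt, w⟫| := by
            rw [h1]
        _ ≤ ‖gradient u pt - gradient v pt‖ * ‖w‖ := abs_real_inner_le_norm _ _
        _ ≤ δ' * (2*R) := by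
            apply mul_le_mul (hgrad pt hptR) hwnorm (norm_nonneg _) (by positivity)
    have hmain : c*R/2 - c*R/8 ≤ fderiv ℝ v pt w := by
      rw [stmt18_fderiv_v_apply p c₀ hc₀ γ v hv pt w]
      have hγw : ⟪γ,w⟫ = G * (R/2 - ⟪e,x₀⟫) := by
        rw [hγe w, hwdef, inner_sub_right, real_inner_smul_right, real_inner_self_eq_norm_sq, he]
        ring
      have hγpt : ⟪γ,pt⟫ = G * ⟪e,pt⟫ := hγe pt
      have hg := hg_lb pt hptR
      have hgd := hgd_bound pt
      have hptw : |⟪pt,w⟫| ≤ 2*R^2 := by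
        calc |⟪pt,w⟫| ≤ ‖pt‖ * ‖w‖ := abs_real_inner_le_norm _ _
          _ ≤ R * (2*R) := by
              apply mul_le_mul hptR hwnorm (norm_nonneg _) (by linarith)
          _ = 2*R^2 := by ring
      have ht1 : G * (R/4) * fR ≤ ⟪γ,w⟫ * (c₀+‖pt‖^2)^p := by
        rw [hγw]
        have hs₀' : ⟪e,x₀⟫ ≤ σ := (abs_le.mp hs₀).2
        have h4 : R/4 ≤ R/2 - ⟪e,x₀⟫ := by linarith [hσ1]
        have h5 : (0:ℝ) ≤ R/2 - ⟪e,x₀⟫ := by linarith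
        calc G * (R/4) * fR ≤ G * (R/2 - ⟪e,x₀⟫) * fR := by
              apply mul_le_mul_of_nonneg_right (mul_le_mul_of_nonneg_left h4 hG.le) hfR.le
          _ ≤ G * (R/2 - ⟪e,x₀⟫) * (c₀+‖pt‖^2)^p := by
              apply mul_le_mul_of_nonneg_left hg (by positivity)
      have ht2 : |⟪γ,pt⟫ * (p * (c₀+‖pt‖^2)^(p-1)) * (2*⟪pt,w⟫)| ≤ 4*G*σ*F0*R^2 := by
        rw [abs_mul, abs_mul]
        have h1 : |⟪γ,pt⟫| ≤ G * σ := by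
          rw [hγpt, abs_mul, abs_of_pos hG]
          exact mul_le_mul_of_nonneg_left hs hG.le
        have h2 : |2*⟪pt,w⟫| ≤ 2*(2*R^2) := by
          rw [abs_mul]
          simp only [abs_two]
          linarith [hptw]
        calc |⟪γ,pt⟫| * |p * (c₀+‖pt‖^2)^(p-1)| * |2*⟪pt,w⟫|
            ≤ (G*σ) * F0 * (2*(2*R^2)) := by
              apply mul_le_mul _ h2 (abs_nonneg _) (by positivity)
              apply mul_le_mul h1 hgd (abs_nonneg _) (by positivity)
          _ = 4*G*σ*F0*R^2 := by ring
      have hcR : G * (R/4) * fR = c*R/2 := by rw [hcdef]; ring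
      have hlow := (abs_le.mp ht2).1
      linarith [ht1, hσ3]
    have hδ'2R : δ' * (2*R) = c*R/8 := by rw [hδ'def]; ring
    have hlow := (abs_le.mp herr).1
    have hcR : 0 < c*R := by positivity
    linarith

end Aux

/-- if `y_n → v` in `C¹_loc(ℝ^N)`, where
`v(x) = ∑ γ_k x_k/(N(N-2)+|x|²)^{N/2}` with `γ ≠ 0`, then for every `R > 0` and all
large `n` the sets `{|x| < R, y_n > 0}` and `{|x| < R, y_n < 0}` are nonempty and
connected. -/
theorem stmt_18 (N : ℕ) (hN : 3 ≤ N)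
    (γ : EuclideanSpace ℝ (Fin N)) (hγ : γ ≠ 0)
    (v : EuclideanSpace ℝ (Fin N) → ℝ)
    (hv : ∀ x, v x = (∑ k, γ k * x k) /
      ((N : ℝ) * ((N : ℝ) - 2) + ‖x‖ ^ 2) ^ ((N : ℝ) / 2))
    (y : ℕ → EuclideanSpace ℝ (Fin N) → ℝ)
    (hy : ∀ n, ContDiff ℝ 1 (y n))
    (hconv : ∀ K : Set (EuclideanSpace ℝ (Fin N)), IsCompact K →
      TendstoUniformlyOn (fun n => y n) v atTop K)
    (hconv' : ∀ K : Set (EuclideanSpace ℝ (Fin N)), IsCompact K →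
      TendstoUniformlyOn (fun n x => gradient (y n) x) (fun x => gradient v x) atTop K) :
    ∀ R > (0 : ℝ), ∃ n₀ : ℕ, ∀ n ≥ n₀,
      IsConnected {x : EuclideanSpace ℝ (Fin N) | ‖x‖ < R ∧ 0 < y n x} ∧
      IsConnected {x : EuclideanSpace ℝ (Fin N) | ‖x‖ < R ∧ y n x < 0} := by
  intro R hR
  have hN3 : (3:ℝ) ≤ (N:ℝ) := by exact_mod_cast hN
  set c₀ : ℝ := (N : ℝ) * ((N : ℝ) - 2) with hc₀def
  have hc₀ : 0 < c₀ := by nlinarith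
  set p : ℝ := -((N : ℝ) / 2) with hpdef
  have hp : p < 0 := by rw [hpdef]; linarith
  -- rewrite v in inner-product form
  have hv' : ∀ x, v x = (inner ℝ γ x : ℝ) * (c₀ + ‖x‖^2)^p := by
    intro x
    have hb : (0:ℝ) < c₀ + ‖x‖ ^ 2 := by positivity
    rw [hv x, hpdef, Real.rpow_neg hb.le, div_eq_mul_inv]
    congr 1
    rw [PiLp.inner_apply]
    exact Finset.sum_congr rfl fun k _ => by simp [mul_comm]
  have hv'' : ∀ x, (fun z => - v z) x = (inner ℝ (-γ) x : ℝ) * (c₀ + ‖x‖^2)^p := by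
    intro x
    simp only [inner_neg_left, neg_mul]
    rw [hv' x]
  obtain ⟨δ₁, hδ₁, δ₁', hδ₁', hkey₁⟩ :=
    stmt18_keylemma p c₀ hp hc₀ γ hγ v hv' R hR
  obtain ⟨δ₂, hδ₂, δ₂', hδ₂', hkey₂⟩ :=
    stmt18_keylemma p c₀ hp hc₀ (-γ) (neg_ne_zero.mpr hγ) (fun z => - v z) hv'' R hR
  set K := Metric.closedBall (0 : EuclideanSpace ℝ (Fin N)) R with hKdef
  have hKc : IsCompact K := isCompact_closedBall _ _
  have hconvK := (Metric.tendstoUniformlyOn_iff).mp (hconv K hKc)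
  have hconvK' := (Metric.tendstoUniformlyOn_iff).mp (hconv' K hKc)
  have ev1 := hconvK δ₁ hδ₁
  have ev2 := hconvK δ₂ hδ₂
  have ev1' := hconvK' δ₁' hδ₁'
  have ev2' := hconvK' δ₂' hδ₂'
  have evall := (ev1.and ev2).and (ev1'.and ev2')
  rw [eventually_atTop] at evall
  obtain ⟨n₀, hn₀⟩ := evall
  refine ⟨n₀, fun n hn => ?_⟩
  obtain ⟨⟨h1, h2⟩, h1', h2'⟩ := hn₀ n hn
  have hmem : ∀ x : EuclideanSpace ℝ (Fin N), ‖x‖ ≤ R → x ∈ K := by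
    intro x hx
    rw [hKdef, Metric.mem_closedBall, dist_zero_right]
    exact hx
  constructor
  · apply hkey₁ (y n) (hy n)
    · intro x hx
      have := h1 x (hmem x hx)
      rw [Real.dist_eq, abs_sub_comm] at this
      exact this.le
    · intro x hx
      have := h1' x (hmem x hx)
      rw [dist_eq_norm, norm_sub_rev] at this
      exact this.le
  · have hsetneg : {x : EuclideanSpace ℝ (Fin N) | ‖x‖ < R ∧ y n x < 0}
        = {x : EuclideanSpace ℝ (Fin N) | ‖x‖ < R ∧ 0 < (fun z => -(y n z)) x} := by
      ext x; simp [neg_pos]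
    rw [hsetneg]
    apply hkey₂ (fun z => -(y n z)) (hy n).neg
    · intro x hx
      have := h2 x (hmem x hx)
      rw [Real.dist_eq, abs_sub_comm] at this
      show |-(y n x) - (-( v x))| ≤ δ₂
      have heq : -(y n x) - (-(v x)) = -(y n x - v x) := by ring
      rw [heq, abs_neg]
      exact this.le
    · intro x hx
      have := h2' x (hmem x hx)
      rw [dist_eq_norm, norm_sub_rev] at this
      have heq : gradient (fun z => -(y n z)) x - gradient (fun z => - v z) x
          = -(gradient (y n) x - gradient v x) := by
        rw [stmt18_gradient_neg, stmt18_gradient_neg]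
        abel
      rw [heq, norm_neg]
      exact this.le
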